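/- A group 𝒢 admits a faithful representation by n×n tropical matrices if and only if 𝒢 is isomorphic to a subgroup of the wreath product ℝ ≀ S_n; that is, there exists an injective map φ : 𝒢 → 𝕋^{n×n} with φ(gh) = φ(g) ⊗ φ(h) for all g, h ∈ 𝒢 if and only if there exists an injective group homomorphism from 𝒢 into (ℝ^n) ⋊ S_n (with S_n acting on ℝ^n by permuting coordinates). -/

import Mathlib

/-- The tropical (max-plus) semiring carrier: `ℝ ∪ {-∞}`, with `⊥` playing the
role of `-∞`. -/
abbrev Trop : Type := WithBot ℝ

/-- Tropical matrix multiplication: `(A ⊗ B) i j = max_k (A i k + B k j)`. -/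
def tropMulMat {n m p : ℕ} (A : Matrix (Fin n) (Fin m) Trop)
    (B : Matrix (Fin m) (Fin p) Trop) : Matrix (Fin n) (Fin p) Trop :=
  fun i j => Finset.univ.sup fun k => A i k + B k j

/-- The action of `S_n` on the (multiplicative version of the) additive group
`ℝ^n` by permuting coordinates. -/
def permAct (n : ℕ) : Equiv.Perm (Fin n) →* MulAut (Multiplicative (Fin n → ℝ)) where
  toFun σ :=
    { toFun := fun v => fun i => v (σ⁻¹ i)
      invFun := fun v => fun i => v (σ i)
      left_inv := fun v => by funext i; simp
      right_inv := fun v => by funext i; simp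
      map_mul' := fun v w => rfl }
  map_one' := by ext v; rfl
  map_mul' := fun σ τ => by ext v; rfl

/-- The wreath product `ℝ ≀ S_n`, realized as the semidirect product
`(ℝ^n) ⋊ S_n` with `S_n` acting by permuting coordinates. -/
abbrev WreathRSn (n : ℕ) : Type :=
  Multiplicative (Fin n → ℝ) ⋊[permAct n] Equiv.Perm (Fin n)


lemma trop_sup_add {ι : Type*} (s : Finset ι) (f : ι → Trop) (c : Trop) :
    s.sup f + c = s.sup fun k => f k + c := by
  classical
  induction s using Finset.induction_on with
  | empty => simp
  | insert _ _ h ih =>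
      rw [Finset.sup_insert, Finset.sup_insert, ← ih]
      exact (max_add_add_right _ _ _).symm

lemma trop_add_sup {ι : Type*} (s : Finset ι) (f : ι → Trop) (c : Trop) :
    c + s.sup f = s.sup fun k => c + f k := by
  classical
  induction s using Finset.induction_on with
  | empty => simp
  | insert _ _ h ih =>
      rw [Finset.sup_insert, Finset.sup_insert, ← ih]
      exact (max_add_add_left _ _ _).symm

lemma trop_real_of_add_eq_zero {p q : Trop} (h : p + q = 0) :
    ∃ a b : ℝ, p = (a : Trop) ∧ q = (b : Trop) ∧ a + b = 0 := by
  induction p using WithBot.recBotCoe with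
  | bot => simp at h
  | coe x =>
    induction q using WithBot.recBotCoe with
    | bot => rw [WithBot.add_bot] at h; simp at h
    | coe y => exact ⟨x, y, rfl, rfl, by exact_mod_cast h⟩

lemma trop_nonpos_of_two {x : Trop} (h : x + x ≤ x) : x ≤ 0 := by
  induction x using WithBot.recBotCoe with
  | bot => exact bot_le
  | coe a =>
      rw [← WithBot.coe_add, WithBot.coe_le_coe] at h
      exact_mod_cast (by linarith : a ≤ 0)

lemma trop_eq_zero_of_add_self {x y : Trop} (hy : y ≠ ⊥) (h : x + y = y) : x = 0 := by
  induction x using WithBot.recBotCoe with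
  | bot => rw [WithBot.bot_add] at h; exact absurd h.symm hy
  | coe a =>
      induction y using WithBot.recBotCoe with
      | bot => exact absurd rfl hy
      | coe b =>
          rw [← WithBot.coe_add, WithBot.coe_inj] at h
          exact_mod_cast (by linarith : a = (0:ℝ))

section PartB
variable {n : ℕ}

lemma idem_le {E : Matrix (Fin n) (Fin n) Trop} (hE : tropMulMat E E = E)
    (i k j : Fin n) : E i k + E k j ≤ E i j := by
  calc E i k + E k j ≤ Finset.univ.sup (fun l => E i l + E l j) :=
        Finset.le_sup (f := fun l => E i l + E l j) (Finset.mem_univ k)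
    _ = E i j := congrFun (congrFun hE i) j

lemma diag_nonpos {E : Matrix (Fin n) (Fin n) Trop} (hE : tropMulMat E E = E)
    (i : Fin n) : E i i ≤ 0 :=
  trop_nonpos_of_two (idem_le hE i i i)

/-- the equivalence relation (on diagonal-zero indices) -/
def trel (E : Matrix (Fin n) (Fin n) Trop) (i j : Fin n) : Prop := E i j + E j i = 0

lemma trel_symm {E : Matrix (Fin n) (Fin n) Trop} {i j : Fin n}
    (h : trel E i j) : trel E j i := by
  unfold trel at *; rw [add_comm]; exact h

lemma trel_diag {E : Matrix (Fin n) (Fin n) Trop} (hE : tropMulMat E E = E)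
    {i j : Fin n} (h : trel E i j) : E i i = 0 :=
  le_antisymm (diag_nonpos hE i) (h ▸ idem_le hE i j i)

lemma trel_refl {E : Matrix (Fin n) (Fin n) Trop} {i : Fin n}
    (h : E i i = 0) : trel E i i := by
  unfold trel; rw [h, add_zero]

lemma trel_trans {E : Matrix (Fin n) (Fin n) Trop} (hE : tropMulMat E E = E)
    {i j k : Fin n} (h1 : trel E i j) (h2 : trel E j k) : trel E i k := by
  have hle : E i k + E k i ≤ 0 := (trel_diag hE h1) ▸ idem_le hE i k i
  have hlow : (E i j + E j k) + (E k j + E j i) ≤ E i k + E k i :=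
    add_le_add (idem_le hE i j k) (idem_le hE k j i)
  have hre : (E i j + E j k) + (E k j + E j i) = (E i j + E j i) + (E k j + E j k) := by
    abel
  rw [hre, h1, trel_symm h2, add_zero] at hlow
  exact le_antisymm hle hlow

open Classical in
/-- canonical representative of the `trel`-class of `i` -/
noncomputable def trho (E : Matrix (Fin n) (Fin n) Trop) (i : Fin n) : Fin n :=
  if h : (Finset.univ.filter fun j => trel E i j).Nonempty
  then (Finset.univ.filter fun j => trel E i j).min' h else i

lemma trho_eq_of_trel {E : Matrix (Fin n) (Fin n) Trop} (hE : tropMulMat E E = E)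
    {i j : Fin n} (h : trel E i j) : trho E i = trho E j := by
  classical
  have hset : (Finset.univ.filter fun l => trel E i l) =
      (Finset.univ.filter fun l => trel E j l) := by
    ext l
    simp only [Finset.mem_filter, Finset.mem_univ, true_and]
    exact ⟨fun hl => trel_trans hE (trel_symm h) hl, fun hl => trel_trans hE h hl⟩
  unfold trho
  have hne : (Finset.univ.filter fun l => trel E j l).Nonempty :=
    ⟨i, by simp only [Finset.mem_filter, Finset.mem_univ, true_and]; exact trel_symm h⟩
  simp only [hset]
  rw [dif_pos hne, dif_pos hne]

lemma trel_trho {E : Matrix (Fin n) (Fin n) Trop} {i : Fin n}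
    (h : E i i = 0) : trel E i (trho E i) := by
  classical
  have hne : (Finset.univ.filter fun j => trel E i j).Nonempty :=
    ⟨i, by simp [trel_refl h]⟩
  have : trho E i ∈ (Finset.univ.filter fun j => trel E i j) := by
    unfold trho
    rw [dif_pos hne]
    exact Finset.min'_mem _ hne
  simpa using this

def isRep (E : Matrix (Fin n) (Fin n) Trop) (i : Fin n) : Prop :=
  E i i = 0 ∧ trho E i = i

lemma trho_isRep {E : Matrix (Fin n) (Fin n) Trop} (hE : tropMulMat E E = E)
    {i : Fin n} (h : E i i = 0) : isRep E (trho E i) := by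
  have h1 : trel E i (trho E i) := trel_trho h
  exact ⟨trel_diag hE (trel_symm h1), trho_eq_of_trel hE (trel_symm h1)⟩

/-- the diagonal spanning lemma: any finite entry factors through a
diagonal-zero index -/
lemma diagSpan {E : Matrix (Fin n) (Fin n) Trop} (hE : tropMulMat E E = E)
    {i j : Fin n} (h : E i j ≠ ⊥) :
    ∃ k, E k k = 0 ∧ E i k + E k j = E i j := by
  classical
  -- one step of path extension
  have step : ∀ a : Fin n, ∃ b, E a b + E b j = E a j := by
    intro a
    obtain ⟨b, _, hb⟩ := Finset.exists_mem_eq_sup Finset.univ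
      ⟨a, Finset.mem_univ a⟩ (fun l => E a l + E l j)
    exact ⟨b, by rw [← hb]; exact congrFun (congrFun hE a) j⟩
  let next : {a : Fin n // E a j ≠ ⊥} → {a : Fin n // E a j ≠ ⊥} := fun p =>
    ⟨(step p.1).choose, by
      have hs := (step p.1).choose_spec
      intro hb
      rw [hb, WithBot.add_bot] at hs
      exact p.2 hs.symm⟩
  let k : ℕ → {a : Fin n // E a j ≠ ⊥} := fun t => next^[t] ⟨i, h⟩
  have hk0 : (k 0).1 = i := rfl
  have hstep : ∀ t, E (k t).1 (k (t+1)).1 + E (k (t+1)).1 j = E (k t).1 j := by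
    intro t
    have : k (t+1) = next (k t) := Function.iterate_succ_apply' next t _
    rw [this]
    exact (step (k t).1).choose_spec
  have invA : ∀ t, E i (k (t+1)).1 + E (k (t+1)).1 j = E i j := by
    intro t
    induction t with
    | zero => have := hstep 0; rwa [hk0] at this
    | succ t ih =>
        refine le_antisymm (idem_le hE i _ j) ?_
        have h1 : E i (k (t+1)).1 + E (k (t+1)).1 (k (t+2)).1 ≤ E i (k (t+2)).1 :=
          idem_le hE _ _ _
        calc E i j = E i (k (t+1)).1 + E (k (t+1)).1 j := ih.symm
          _ = E i (k (t+1)).1 + (E (k (t+1)).1 (k (t+2)).1 + E (k (t+2)).1 j) := by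
              rw [hstep (t+1)]
          _ = (E i (k (t+1)).1 + E (k (t+1)).1 (k (t+2)).1) + E (k (t+2)).1 j := by
              rw [add_assoc]
          _ ≤ E i (k (t+2)).1 + E (k (t+2)).1 j := add_le_add_left h1 _
  have invB : ∀ a d, E (k a).1 (k (a+1+d)).1 + E (k (a+1+d)).1 j = E (k a).1 j := by
    intro a d
    induction d with
    | zero => exact hstep a
    | succ d ih =>
        show E (k a).1 (k ((a+1+d)+1)).1 + E (k ((a+1+d)+1)).1 j = E (k a).1 j
        set m := a + 1 + d with hm
        refine le_antisymm (idem_le hE _ _ j) ?_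
        have h1 : E (k a).1 (k m).1 + E (k m).1 (k (m+1)).1
            ≤ E (k a).1 (k (m+1)).1 := idem_le hE _ _ _
        calc E (k a).1 j = E (k a).1 (k m).1 + E (k m).1 j := ih.symm
          _ = E (k a).1 (k m).1 +
              (E (k m).1 (k (m+1)).1 + E (k (m+1)).1 j) := by
              rw [hstep m]
          _ = (E (k a).1 (k m).1 + E (k m).1 (k (m+1)).1) +
              E (k (m+1)).1 j := (add_assoc _ _ _).symm
          _ ≤ _ := add_le_add_left h1 _
  -- pigeonhole
  have hnotinj : ¬ Function.Injective (fun t : Fin (n+1) => (k t.1).1) := by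
    intro hinj
    have := Fintype.card_le_of_injective _ hinj
    simp [Fintype.card_fin] at this
  rw [Function.not_injective_iff] at hnotinj
  obtain ⟨a, b, hab, hne⟩ := hnotinj
  -- wlog a.1 < b.1
  have key : ∀ A B : ℕ, A < B → (k A).1 = (k B).1 → E (k A).1 (k A).1 = 0 := by
    intro A B hAB habv
    have hd : A + 1 + (B - A - 1) = B := by omega
    have := invB A (B - A - 1)
    rw [hd, ← habv] at this
    exact trop_eq_zero_of_add_self (k A).2 this
  have hcases : ∃ A : ℕ, E (k A).1 (k A).1 = 0 := by
    rcases lt_or_gt_of_ne (fun hh : a.1 = b.1 => hne (Fin.ext hh)) with hlt | hgt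
    · exact ⟨a.1, key a.1 b.1 hlt hab⟩
    · exact ⟨b.1, key b.1 a.1 hgt hab.symm⟩
  obtain ⟨A, hdiag⟩ := hcases
  cases A with
  | zero =>
      have hdiag' : E i i = 0 := hdiag
      exact ⟨i, hdiag', by rw [hdiag', zero_add]⟩
  | succ A' => exact ⟨(k (A'+1)).1, hdiag, invA A'⟩

end PartB

section PartC
variable {n : ℕ} {G : Type*} [Group G]

lemma hEE {φ : G → Matrix (Fin n) (Fin n) Trop}
    (hmul : ∀ g h : G, φ (g * h) = tropMulMat (φ g) (φ h)) :
    tropMulMat (φ 1) (φ 1) = φ 1 :=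
  (hmul 1 1).symm.trans (congrArg φ (one_mul 1))

lemma le2 {φ : G → Matrix (Fin n) (Fin n) Trop}
    (hmul : ∀ g h : G, φ (g * h) = tropMulMat (φ g) (φ h))
    (g h : G) (i k j : Fin n) : φ g i k + φ h k j ≤ φ (g * h) i j := by
  rw [hmul]
  exact Finset.le_sup (f := fun l => φ g i l + φ h l j) (Finset.mem_univ k)

lemma le3 {φ : G → Matrix (Fin n) (Fin n) Trop}
    (hmul : ∀ g h : G, φ (g * h) = tropMulMat (φ g) (φ h))
    (g h f : G) (i k l j : Fin n) :
    φ g i k + φ h k l + φ f l j ≤ φ (g * h * f) i j :=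
  le_trans (add_le_add_left (le2 hmul g h i k l) _) (le2 hmul (g*h) f i l j)

lemma sandwich {φ : G → Matrix (Fin n) (Fin n) Trop}
    (hmul : ∀ g h : G, φ (g * h) = tropMulMat (φ g) (φ h))
    (g : G) (i k l j : Fin n) :
    φ 1 i k + φ g k l + φ 1 l j ≤ φ g i j := by
  have := le3 hmul 1 g 1 i k l j
  rwa [one_mul, mul_one] at this

lemma FUNDle {φ : G → Matrix (Fin n) (Fin n) Trop}
    (hmul : ∀ g h : G, φ (g * h) = tropMulMat (φ g) (φ h))
    (g : G) (i k : Fin n) (hk : φ 1 k k = 0) :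
    φ g i k + φ g⁻¹ k i ≤ 0 := by
  have h1 := le2 hmul g⁻¹ g k i k
  rw [inv_mul_cancel, hk] at h1
  rwa [add_comm]

lemma FUNDex {φ : G → Matrix (Fin n) (Fin n) Trop}
    (hmul : ∀ g h : G, φ (g * h) = tropMulMat (φ g) (φ h))
    (g : G) (i : Fin n) (hi : φ 1 i i = 0) :
    ∃ k, φ 1 k k = 0 ∧ φ g i k + φ g⁻¹ k i = 0 := by
  have hsup : Finset.univ.sup (fun k => φ g i k + φ g⁻¹ k i) = 0 := by
    have h1 := hmul g g⁻¹
    rw [mul_inv_cancel] at h1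
    have : φ 1 i i = Finset.univ.sup (fun k => φ g i k + φ g⁻¹ k i) :=
      congrFun (congrFun h1 i) i
    rw [← this, hi]
  obtain ⟨b, _, hb⟩ := Finset.exists_mem_eq_sup Finset.univ
    ⟨i, Finset.mem_univ i⟩ (fun k => φ g i k + φ g⁻¹ k i)
  have heq : φ g i b + φ g⁻¹ b i = 0 := by rw [← hb, hsup]
  have hbb : φ 1 b b = 0 := by
    have h2 := le2 hmul g⁻¹ g b i b
    rw [inv_mul_cancel] at h2
    rw [add_comm] at h2
    exact le_antisymm (diag_nonpos (hEE hmul) b) (heq ▸ h2)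
  exact ⟨b, hbb, heq⟩

lemma TRANS {φ : G → Matrix (Fin n) (Fin n) Trop}
    (hmul : ∀ g h : G, φ (g * h) = tropMulMat (φ g) (φ h))
    {g : G} {i i' k k' : Fin n}
    (h1 : trel (φ 1) i i') (h2 : trel (φ 1) k k')
    (h0 : φ g i k + φ g⁻¹ k i = 0) :
    φ g i' k' + φ g⁻¹ k' i' = 0 := by
  have hupper := FUNDle hmul g i' k' (trel_diag (hEE hmul) (trel_symm h2))
  have low1 : φ 1 i' i + φ g i k + φ 1 k k' ≤ φ g i' k' := sandwich hmul g i' i k k'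
  have low2 : φ 1 k' k + φ g⁻¹ k i + φ 1 i i' ≤ φ g⁻¹ k' i' := sandwich hmul g⁻¹ k' k i i'
  have hcomb : (φ 1 i' i + φ g i k + φ 1 k k') + (φ 1 k' k + φ g⁻¹ k i + φ 1 i i') =
      (φ 1 i i' + φ 1 i' i) + ((φ 1 k k' + φ 1 k' k) + (φ g i k + φ g⁻¹ k i)) := by
    abel
  rw [h1, h2, h0] at hcomb
  simp only [add_zero, zero_add] at hcomb
  exact le_antisymm hupper (hcomb ▸ add_le_add low1 low2)

lemma MULZ {φ : G → Matrix (Fin n) (Fin n) Trop}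
    (hmul : ∀ g h : G, φ (g * h) = tropMulMat (φ g) (φ h))
    {g h : G} {i k m : Fin n} (hm : φ 1 m m = 0)
    (h1 : φ g i k + φ g⁻¹ k i = 0) (h2 : φ h k m + φ h⁻¹ m k = 0) :
    φ (g * h) i m + φ (g * h)⁻¹ m i = 0 := by
  have hupper := FUNDle hmul (g * h) i m hm
  have lowA := le2 hmul g h i k m
  have lowB : φ h⁻¹ m k + φ g⁻¹ k i ≤ φ (g * h)⁻¹ m i := by
    rw [mul_inv_rev]
    exact le2 hmul h⁻¹ g⁻¹ m k i
  have hcomb : (φ g i k + φ h k m) + (φ h⁻¹ m k + φ g⁻¹ k i) =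
      (φ g i k + φ g⁻¹ k i) + (φ h k m + φ h⁻¹ m k) := by abel
  rw [h1, h2, add_zero] at hcomb
  exact le_antisymm hupper (hcomb ▸ add_le_add lowA lowB)

open Classical in
/-- the permutation-on-representatives induced by a group element -/
noncomputable def sfun (φ : G → Matrix (Fin n) (Fin n) Trop) (g : G) (i : Fin n) :
    Fin n :=
  if isRep (φ 1) i then
    (if h : ∃ k, φ 1 k k = 0 ∧ φ g i k + φ g⁻¹ k i = 0 then trho (φ 1) h.choose else i)
  else i

open Classical in
lemma sfun_nonrep (φ : G → Matrix (Fin n) (Fin n) Trop) {g : G} {i : Fin n}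
    (h : ¬ isRep (φ 1) i) : sfun φ g i = i := by
  unfold sfun; rw [if_neg h]

open Classical in
lemma sfun_spec {φ : G → Matrix (Fin n) (Fin n) Trop}
    (hmul : ∀ g h : G, φ (g * h) = tropMulMat (φ g) (φ h))
    {g : G} {i : Fin n} (hrep : isRep (φ 1) i) :
    isRep (φ 1) (sfun φ g i) ∧ φ g i (sfun φ g i) + φ g⁻¹ (sfun φ g i) i = 0 := by
  have hex : ∃ k, φ 1 k k = 0 ∧ φ g i k + φ g⁻¹ k i = 0 := FUNDex hmul g i hrep.1
  obtain ⟨hk0, h0⟩ := hex.choose_spec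
  unfold sfun
  rw [if_pos hrep, dif_pos hex]
  exact ⟨trho_isRep (hEE hmul) hk0, TRANS hmul (trel_refl hrep.1) (trel_trho hk0) h0⟩

lemma sfun_char {φ : G → Matrix (Fin n) (Fin n) Trop}
    (hmul : ∀ g h : G, φ (g * h) = tropMulMat (φ g) (φ h))
    {g : G} {i : Fin n} (hrep : isRep (φ 1) i) {k : Fin n}
    (hk : φ 1 k k = 0) (h0 : φ g i k + φ g⁻¹ k i = 0) :
    sfun φ g i = trho (φ 1) k := by
  obtain ⟨hsrep, hs0⟩ := sfun_spec hmul (g := g) hrep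
  set s := sfun φ g i with hsdef
  have l1 : φ g⁻¹ s i + φ g i k ≤ φ 1 s k := by
    have := le2 hmul g⁻¹ g s i k; rwa [inv_mul_cancel] at this
  have l2 : φ g⁻¹ k i + φ g i s ≤ φ 1 k s := by
    have := le2 hmul g⁻¹ g k i s; rwa [inv_mul_cancel] at this
  have hupper : φ 1 s k + φ 1 k s ≤ 0 :=
    hsrep.1 ▸ idem_le (hEE hmul) s k s
  have hcomb : (φ g⁻¹ s i + φ g i k) + (φ g⁻¹ k i + φ g i s) =
      (φ g i s + φ g⁻¹ s i) + (φ g i k + φ g⁻¹ k i) := by abel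
  rw [hs0, h0, add_zero] at hcomb
  have hrel : trel (φ 1) s k :=
    le_antisymm hupper (hcomb ▸ add_le_add l1 l2)
  calc s = trho (φ 1) s := hsrep.2.symm
    _ = trho (φ 1) k := trho_eq_of_trel (hEE hmul) hrel

lemma sfun_one {φ : G → Matrix (Fin n) (Fin n) Trop}
    (hmul : ∀ g h : G, φ (g * h) = tropMulMat (φ g) (φ h))
    (i : Fin n) : sfun φ (1 : G) i = i := by
  by_cases hrep : isRep (φ 1) i
  · have h0 : φ (1:G) i i + φ ((1:G))⁻¹ i i = 0 := by
      rw [inv_one, hrep.1, add_zero]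
    rw [sfun_char hmul hrep hrep.1 h0]
    exact hrep.2
  · exact sfun_nonrep φ hrep

lemma sfun_mul {φ : G → Matrix (Fin n) (Fin n) Trop}
    (hmul : ∀ g h : G, φ (g * h) = tropMulMat (φ g) (φ h))
    (g h : G) (i : Fin n) : sfun φ (g * h) i = sfun φ h (sfun φ g i) := by
  by_cases hrep : isRep (φ 1) i
  · obtain ⟨hrk, h0g⟩ := sfun_spec hmul (g := g) hrep
    obtain ⟨hrm, h0h⟩ := sfun_spec hmul (g := h) hrk
    have h0 := MULZ hmul hrm.1 h0g h0h
    rw [sfun_char hmul hrep hrm.1 h0]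
    exact hrm.2
  · rw [sfun_nonrep φ (g := g * h) hrep, sfun_nonrep φ (g := g) hrep,
      sfun_nonrep φ (g := h) hrep]

open Classical in
/-- the translation-vector induced by a group element -/
noncomputable def vfun (φ : G → Matrix (Fin n) (Fin n) Trop) (g : G) (i : Fin n) : ℝ :=
  if isRep (φ 1) i then (φ g i (sfun φ g i)).unbotD 0 else 0

open Classical in
lemma vfun_nonrep (φ : G → Matrix (Fin n) (Fin n) Trop) {g : G} {i : Fin n}
    (h : ¬ isRep (φ 1) i) : vfun φ g i = 0 := by
  unfold vfun; rw [if_neg h]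

open Classical in
lemma vfun_coe {φ : G → Matrix (Fin n) (Fin n) Trop}
    (hmul : ∀ g h : G, φ (g * h) = tropMulMat (φ g) (φ h))
    {g : G} {i : Fin n} (hrep : isRep (φ 1) i) :
    φ g i (sfun φ g i) = ((vfun φ g i : ℝ) : Trop) := by
  obtain ⟨a, b, ha, hb, hab⟩ := trop_real_of_add_eq_zero (sfun_spec hmul (g := g) hrep).2
  unfold vfun
  rw [if_pos hrep, ha]
  simp

lemma vfun_mul {φ : G → Matrix (Fin n) (Fin n) Trop}
    (hmul : ∀ g h : G, φ (g * h) = tropMulMat (φ g) (φ h))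
    (g h : G) (i : Fin n) :
    vfun φ (g * h) i = vfun φ g i + vfun φ h (sfun φ g i) := by
  by_cases hrep : isRep (φ 1) i
  · set k := sfun φ g i with hk
    obtain ⟨hrk, h0g⟩ := sfun_spec hmul (g := g) hrep
    obtain ⟨hrm, h0h⟩ := sfun_spec hmul (g := h) hrk
    set m := sfun φ h k with hm
    have hsm : sfun φ (g * h) i = m := sfun_mul hmul g h i
    obtain ⟨a, a', ha, ha', haa⟩ := trop_real_of_add_eq_zero h0g
    obtain ⟨b, b', hb, hb', hbb⟩ := trop_real_of_add_eq_zero h0h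
    have h0gh := (sfun_spec hmul (g := g * h) hrep).2
    rw [hsm] at h0gh
    obtain ⟨c, c', hc, hc', hcc⟩ := trop_real_of_add_eq_zero h0gh
    have ineq1 : φ g i k + φ h k m ≤ φ (g * h) i m := le2 hmul g h i k m
    have ineq2 : φ h⁻¹ m k + φ g⁻¹ k i ≤ φ (g * h)⁻¹ m i := by
      rw [mul_inv_rev]; exact le2 hmul h⁻¹ g⁻¹ m k i
    rw [ha, hb, hc, ← WithBot.coe_add, WithBot.coe_le_coe] at ineq1
    rw [ha', hb', hc', ← WithBot.coe_add, WithBot.coe_le_coe] at ineq2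
    have hceq : c = a + b := by linarith
    have e1 : vfun φ (g * h) i = c := by
      unfold vfun; rw [if_pos hrep, hsm, hc]; simp
    have e2 : vfun φ g i = a := by
      unfold vfun; rw [if_pos hrep, ← hk, ha]; simp
    have e3 : vfun φ h k = b := by
      unfold vfun; rw [if_pos hrk, ← hm, hb]; simp
    rw [e1, e2, e3, hceq]
  · rw [vfun_nonrep φ (g := g * h) hrep, vfun_nonrep φ (g := g) hrep,
      sfun_nonrep φ (g := g) hrep, vfun_nonrep φ (g := h) hrep, add_zero]

end PartC

section PartD
variable {n : ℕ} {G : Type*} [Group G]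

lemma SAND {φ : G → Matrix (Fin n) (Fin n) Trop}
    (hmul : ∀ g h : G, φ (g * h) = tropMulMat (φ g) (φ h))
    {g : G} {k l : Fin n} (hk : φ 1 k k = 0) (hl : φ 1 l l = 0) :
    φ g k l = φ 1 k (trho (φ 1) k) +
      (φ g (trho (φ 1) k) (sfun φ g (trho (φ 1) k)) +
        φ 1 (sfun φ g (trho (φ 1) k)) (trho (φ 1) l)) + φ 1 (trho (φ 1) l) l := by
  have hE := hEE hmul
  set t := trho (φ 1) k with ht
  set u := trho (φ 1) l with hu
  set m := sfun φ g t with hm2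
  have htrep : isRep (φ 1) t := trho_isRep hE hk
  have hkt : trel (φ 1) k t := trel_trho hk
  have hlu : trel (φ 1) l u := trel_trho hl
  have spec := (sfun_spec hmul (g := g) htrep).2
  have stepii : φ g t u = φ g t m + φ 1 m u := by
    refine le_antisymm ?_ ?_
    · have lb : φ g⁻¹ m t + φ g t u ≤ φ 1 m u := by
        have := le2 hmul g⁻¹ g m t u; rwa [inv_mul_cancel] at this
      calc φ g t u = φ g t m + (φ g⁻¹ m t + φ g t u) := by
            rw [← add_assoc, spec, zero_add]
        _ ≤ φ g t m + φ 1 m u := add_le_add_right lb _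
    · have := le2 hmul g 1 t m u
      rwa [mul_one] at this
  have stepi : φ g k l = φ 1 k t + φ g t u + φ 1 u l := by
    refine le_antisymm ?_ (sandwich hmul g k t u l)
    have lb : φ 1 t k + φ g k l + φ 1 l u ≤ φ g t u := sandwich hmul g t k l u
    have hcomb : φ 1 k t + (φ 1 t k + φ g k l + φ 1 l u) + φ 1 u l =
        (φ 1 k t + φ 1 t k) + ((φ 1 l u + φ 1 u l) + φ g k l) := by abel
    rw [hkt, hlu] at hcomb
    simp only [zero_add] at hcomb
    calc φ g k l = φ 1 k t + (φ 1 t k + φ g k l + φ 1 l u) + φ 1 u l := hcomb.symm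
      _ ≤ φ 1 k t + φ g t u + φ 1 u l :=
          add_le_add_left (add_le_add_right lb _) _
  rw [stepi, stepii]

lemma INJLE {φ : G → Matrix (Fin n) (Fin n) Trop}
    (hmul : ∀ g h : G, φ (g * h) = tropMulMat (φ g) (φ h)) {g h : G}
    (hs : ∀ i, sfun φ g i = sfun φ h i) (hv : ∀ i, vfun φ g i = vfun φ h i)
    (i j : Fin n) : φ g i j ≤ φ h i j := by
  have hE := hEE hmul
  have expand : φ g i j =
      Finset.univ.sup fun l =>
        (Finset.univ.sup fun k => φ 1 i k + φ g k l) + φ 1 l j := by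
    have h1 : φ g = tropMulMat (tropMulMat (φ 1) (φ g)) (φ 1) := by
      rw [← hmul, ← hmul, one_mul, mul_one]
    exact congrFun (congrFun h1 i) j
  rw [expand]
  refine Finset.sup_le fun l _ => ?_
  rw [trop_sup_add]
  refine Finset.sup_le fun k _ => ?_
  by_cases c1 : φ 1 i k = ⊥
  · rw [c1]; simp
  by_cases c2 : φ g k l = ⊥
  · rw [c2]; simp
  by_cases c3 : φ 1 l j = ⊥
  · rw [c3]; simp
  obtain ⟨k', hk'0, hk'⟩ := diagSpan hE c1
  obtain ⟨l', hl'0, hl'⟩ := diagSpan hE c3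
  have hmid : φ 1 k' k + φ g k l + φ 1 l l' ≤ φ g k' l' := sandwich hmul g k' k l l'
  have heq : φ 1 i k + φ g k l + φ 1 l j =
      φ 1 i k' + (φ 1 k' k + φ g k l + φ 1 l l') + φ 1 l' j := by
    rw [← hk', ← hl']; abel
  have hgh : φ g k' l' = φ h k' l' := by
    rw [SAND hmul (g := g) hk'0 hl'0, SAND hmul (g := h) hk'0 hl'0,
      vfun_coe hmul (g := g) (trho_isRep hE hk'0),
      vfun_coe hmul (g := h) (trho_isRep hE hk'0),
      hs (trho (φ 1) k'), hv (trho (φ 1) k')]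
  calc φ 1 i k + φ g k l + φ 1 l j
      = φ 1 i k' + (φ 1 k' k + φ g k l + φ 1 l l') + φ 1 l' j := heq
    _ ≤ φ 1 i k' + φ g k' l' + φ 1 l' j :=
        add_le_add_left (add_le_add_right hmid _) _
    _ = φ 1 i k' + φ h k' l' + φ 1 l' j := by rw [hgh]
    _ ≤ φ h i j := sandwich hmul h i k' l' j

end PartD

theorem tropical_rep_iff_embeds_in_wreath {n : ℕ} (G : Type*) [Group G] :
    (∃ φ : G → Matrix (Fin n) (Fin n) Trop,
        Function.Injective φ ∧
        ∀ g h : G, φ (g * h) = tropMulMat (φ g) (φ h)) ↔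
    ∃ ψ : G →* WreathRSn n, Function.Injective ψ := by
  constructor
  · rintro ⟨φ, hinj, hmul⟩
    have hsinv : ∀ (g : G) (i : Fin n), sfun φ g⁻¹ (sfun φ g i) = i := by
      intro g i
      rw [← sfun_mul hmul g g⁻¹ i, mul_inv_cancel, sfun_one hmul]
    let sperm : G → Equiv.Perm (Fin n) := fun g =>
      { toFun := sfun φ g
        invFun := sfun φ g⁻¹
        left_inv := fun i => hsinv g i
        right_inv := fun i => by have := hsinv g⁻¹ i; rwa [inv_inv] at this }
    have spermmul : ∀ g h : G, sperm (g * h) = sperm h * sperm g := by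
      intro g h
      exact Equiv.ext fun i => sfun_mul hmul g h i
    let F : G → WreathRSn n := fun g =>
      ⟨Multiplicative.ofAdd (vfun φ g), (sperm g)⁻¹⟩
    have hmap : ∀ g h : G, F (g * h) = F g * F h := by
      intro g h
      refine SemidirectProduct.ext ?_ ?_
      · rw [SemidirectProduct.mul_left]
        have hv : vfun φ (g * h) = fun i => vfun φ g i + vfun φ h (sfun φ g i) :=
          funext fun i => vfun_mul hmul g h i
        show Multiplicative.ofAdd (vfun φ (g * h)) = _
        rw [hv]
        rfl
      · rw [SemidirectProduct.mul_right]
        show (sperm (g * h))⁻¹ = (sperm g)⁻¹ * (sperm h)⁻¹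
        rw [spermmul g h, mul_inv_rev]
    refine ⟨MonoidHom.mk' F hmap, ?_⟩
    intro g h hgh
    apply hinj
    have hleft : vfun φ g = vfun φ h :=
      Multiplicative.ofAdd.injective (congrArg SemidirectProduct.left hgh)
    have hright : (sperm g)⁻¹ = (sperm h)⁻¹ := congrArg SemidirectProduct.right hgh
    have hsp : sperm g = sperm h := inv_injective hright
    have hs : ∀ i, sfun φ g i = sfun φ h i := fun i => Equiv.ext_iff.mp hsp i
    have hv : ∀ i, vfun φ g i = vfun φ h i := fun i => congrFun hleft i
    funext i j
    exact le_antisymm (INJLE hmul hs hv i j)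
      (INJLE hmul (fun i => (hs i).symm) (fun i => (hv i).symm) i j)
  · rintro ⟨ψ, hψ⟩
    classical
    set Φ : G → Matrix (Fin n) (Fin n) Trop := fun g i j =>
      if (ψ g).right j = i then ((Multiplicative.toAdd ((ψ g).left)) i : Trop) else ⊥
      with hΦ
    have hent : ∀ g i j, Φ g i j =
        if (ψ g).right j = i then ((Multiplicative.toAdd ((ψ g).left)) i : Trop) else ⊥ :=
      fun g i j => rfl
    refine ⟨Φ, ?_, ?_⟩
    · intro g h hgh
      apply hψ
      have hr : (ψ g).right = (ψ h).right := by
        apply Equiv.ext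
        intro j
        have h1 := congrFun (congrFun hgh ((ψ g).right j)) j
        rw [hent g, hent h, if_pos rfl] at h1
        by_cases hc : (ψ h).right j = (ψ g).right j
        · exact hc.symm
        · rw [if_neg hc] at h1
          exact absurd h1 WithBot.coe_ne_bot
      have hl : (ψ g).left = (ψ h).left := by
        have hv : ∀ i, Multiplicative.toAdd ((ψ g).left) i
            = Multiplicative.toAdd ((ψ h).left) i := by
          intro i
          have h1 := congrFun (congrFun hgh i) ((ψ g).right⁻¹ i)
          have hfix : (ψ g).right ((ψ g).right⁻¹ i) = i :=
            Equiv.apply_symm_apply _ i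
          rw [hent g, hent h, if_pos hfix, ← hr, if_pos hfix] at h1
          exact_mod_cast h1
        exact Multiplicative.toAdd.injective (funext hv)
      exact SemidirectProduct.ext hl hr
    · intro g h
      funext i j
      have hprod : ψ (g * h) = ψ g * ψ h := map_mul ψ g h
      have hfun : (fun k => Φ g i k + Φ h k j) = fun k =>
          (if (ψ g).right k = i then ((Multiplicative.toAdd ((ψ g).left)) i : Trop) else ⊥) +
          (if (ψ h).right j = k then ((Multiplicative.toAdd ((ψ h).left)) k : Trop) else ⊥) :=
        funext fun k => by rw [hent g, hent h]
      show Φ (g * h) i j = Finset.univ.sup fun k => Φ g i k + Φ h k j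
      rw [hent (g*h) i j, hprod, hfun]
      have hL : ∀ i, Multiplicative.toAdd ((ψ g * ψ h).left) i =
          Multiplicative.toAdd ((ψ g).left) i +
          Multiplicative.toAdd ((ψ h).left) ((ψ g).right⁻¹ i) := fun i => by
        rw [SemidirectProduct.mul_left]
        rfl
      have hR : (ψ g * ψ h).right j = (ψ g).right ((ψ h).right j) := by
        rw [SemidirectProduct.mul_right]
        rfl
      refine le_antisymm ?_ ?_
      · by_cases hij : (ψ g * ψ h).right j = i
        · rw [if_pos hij]
          have hk0 : (ψ g).right ((ψ h).right j) = i := by rw [← hR]; exact hij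
          refine le_trans (le_of_eq ?_)
            (Finset.le_sup (f := fun k =>
              (if (ψ g).right k = i then ((Multiplicative.toAdd ((ψ g).left)) i : Trop) else ⊥) +
              (if (ψ h).right j = k then ((Multiplicative.toAdd ((ψ h).left)) k : Trop) else ⊥))
              (Finset.mem_univ ((ψ h).right j)))
          beta_reduce
          rw [if_pos hk0, if_pos rfl, hL i]
          have hinvk : (ψ g).right⁻¹ i = (ψ h).right j := by
            rw [← hk0]; exact Equiv.symm_apply_apply _ _
          rw [hinvk, WithBot.coe_add]
        · rw [if_neg hij]; exact bot_le
      · refine Finset.sup_le fun k _ => ?_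
        beta_reduce
        by_cases hk : (ψ h).right j = k
        · by_cases hik : (ψ g).right k = i
          · have hij : (ψ g * ψ h).right j = i := by rw [hR, hk]; exact hik
            rw [if_pos hik, if_pos hk, if_pos hij, hL i]
            have hinvk : (ψ g).right⁻¹ i = k := by
              rw [← hik]; exact Equiv.symm_apply_apply _ _
            rw [hinvk, WithBot.coe_add]
          · rw [if_neg hik, WithBot.bot_add]; exact bot_le
        · rw [if_neg hk, WithBot.add_bot]; exact bot_le
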